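/- Split lower bound for the KL divergence (key step in the proof of Lemma 3.3): Let Ω ⊆ ℝ^d be measurable with the Lebesgue measure, and let p, q : Ω → ℝ be measurable probability densities with p(x) > 0 and q(x) > 0 for all x ∈ Ω, such that p log(p/q) is integrable. Define A = {x ∈ Ω : q(x) > 2p(x)} and B = {x ∈ Ω : q(x) ≤ 2p(x)}. Then ∫_Ω p log(p/q) dx ≥ (1 − log 2) · ( ∫_A (q(x) − p(x)) dx + ∫_B (q(x) − p(x))²/p(x) dx ). -/

import Mathlib

open MeasureTheory

open MeasureTheory Set

private lemma hasDeriv_psi (c x : ℝ) (hx : x ≠ 0) :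
    HasDerivAt (fun t : ℝ => t - 1 - Real.log t - c * (t - 1) ^ 2)
      ((x - 1) * (x⁻¹ - 2 * c)) x := by
  have h1 : HasDerivAt (fun t : ℝ => t - 1) 1 x := (hasDerivAt_id x).sub_const 1
  have h2 := Real.hasDerivAt_log hx
  have h3 : HasDerivAt (fun t : ℝ => c * (t - 1) ^ 2) (c * (2 * (x - 1))) x := by
    simpa using (((hasDerivAt_id x).sub_const 1).pow 2).const_mul c
  have h := (h1.sub h2).sub h3
  refine h.congr_deriv ?_
  linear_combination (-1 : ℝ) * mul_inv_cancel₀ hx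

private lemma anti_psi (c a b : ℝ) (ha : 0 < a)
    (hsign : ∀ x, a < x → x < b → (x - 1) * (x⁻¹ - 2 * c) ≤ 0) :
    AntitoneOn (fun t : ℝ => t - 1 - Real.log t - c * (t - 1) ^ 2) (Set.Icc a b) := by
  apply antitoneOn_of_deriv_nonpos (convex_Icc a b)
  · intro x hx
    have hx0 : x ≠ 0 := by have := hx.1; intro h; rw [h] at this; linarith
    exact (hasDeriv_psi c x hx0).differentiableAt.continuousAt.continuousWithinAt
  · rw [interior_Icc]
    intro x hx
    have hx0 : x ≠ 0 := by have := hx.1; intro h; rw [h] at this; linarith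
    exact (hasDeriv_psi c x hx0).differentiableAt.differentiableWithinAt
  · rw [interior_Icc]
    intro x hx
    have hx0 : x ≠ 0 := by have := hx.1; intro h; rw [h] at this; linarith
    rw [(hasDeriv_psi c x hx0).deriv]
    exact hsign x hx.1 hx.2

private lemma mono_psi (c a b : ℝ) (ha : 0 < a)
    (hsign : ∀ x, a < x → x < b → 0 ≤ (x - 1) * (x⁻¹ - 2 * c)) :
    MonotoneOn (fun t : ℝ => t - 1 - Real.log t - c * (t - 1) ^ 2) (Set.Icc a b) := by
  apply monotoneOn_of_deriv_nonneg (convex_Icc a b)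
  · intro x hx
    have hx0 : x ≠ 0 := by have := hx.1; intro h; rw [h] at this; linarith
    exact (hasDeriv_psi c x hx0).differentiableAt.continuousAt.continuousWithinAt
  · rw [interior_Icc]
    intro x hx
    have hx0 : x ≠ 0 := by have := hx.1; intro h; rw [h] at this; linarith
    exact (hasDeriv_psi c x hx0).differentiableAt.differentiableWithinAt
  · rw [interior_Icc]
    intro x hx
    have hx0 : x ≠ 0 := by have := hx.1; intro h; rw [h] at this; linarith
    rw [(hasDeriv_psi c x hx0).deriv]
    exact hsign x hx.1 hx.2

private lemma psi_nonneg (t : ℝ) (ht : 0 < t) (ht2 : t ≤ 2) :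
    (1 - Real.log 2) * (t - 1) ^ 2 ≤ t - 1 - Real.log t := by
  have hl1 : Real.log 2 < 0.6931471808 := Real.log_two_lt_d9
  have hl2 : (0.6931471803 : ℝ) < Real.log 2 := Real.log_two_gt_d9
  set c : ℝ := 1 - Real.log 2 with hc
  set f : ℝ → ℝ := fun t => t - 1 - Real.log t - c * (t - 1) ^ 2 with hf
  have hf1 : f 1 = 0 := by simp [hf]
  have hf2 : f 2 = 0 := by simp [hf, hc]; ring
  suffices h : 0 ≤ f t by simp only [hf] at h; linarith
  have h2cpos : 0 < 2 * c := by rw [hc]; nlinarith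
  set m : ℝ := (2 * c)⁻¹ with hm
  have hmc : m * (2 * c) = 1 := inv_mul_cancel₀ h2cpos.ne'
  have hminv : m⁻¹ = 2 * c := by rw [hm, inv_inv]
  have hmpos : 0 < m := by positivity
  have hm1 : 1 < m := by nlinarith
  have hm2 : m < 2 := by nlinarith
  rcases le_or_gt t 1 with h1 | h1
  · have hanti := anti_psi c t 1 ht (fun x hx1 hx2 => by
      have hx0 : 0 < x := lt_trans ht hx1
      have hinv : 1 < x⁻¹ := (one_lt_inv₀ hx0).mpr hx2
      nlinarith)
    have h0 : f 1 ≤ f t := hanti (Set.left_mem_Icc.mpr h1) (Set.right_mem_Icc.mpr h1) h1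
    rw [hf1] at h0; exact h0
  · rcases le_or_gt t m with h2 | h2
    · have hmono := mono_psi c 1 t one_pos (fun x hx1 hx2 => by
        have hx0 : 0 < x := lt_trans one_pos hx1
        have hinv : m⁻¹ < x⁻¹ := by
          apply inv_strictAnti₀ hx0 (lt_of_lt_of_le hx2 h2)
        rw [hminv] at hinv
        nlinarith)
      have h0 : f 1 ≤ f t := hmono (Set.left_mem_Icc.mpr h1.le) (Set.right_mem_Icc.mpr h1.le) h1.le
      rw [hf1] at h0; exact h0
    · have hanti := anti_psi c t 2 ht (fun x hx1 hx2 => by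
        have hx0 : 0 < x := lt_trans ht hx1
        have hinv : x⁻¹ < m⁻¹ := by
          apply inv_strictAnti₀ hmpos (lt_trans h2 hx1)
        rw [hminv] at hinv
        nlinarith)
      have h0 : f 2 ≤ f t := hanti (Set.left_mem_Icc.mpr ht2) (Set.right_mem_Icc.mpr ht2) ht2
      rw [hf2] at h0; exact h0

private lemma pointwise_B (p q : ℝ) (hp : 0 < p) (hq : 0 < q) (h : q ≤ 2 * p) :
    (1 - Real.log 2) * ((q - p) ^ 2 / p) ≤ p * Real.log (p / q) + (q - p) := by
  have ht : 0 < q / p := div_pos hq hp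
  have ht2 : q / p ≤ 2 := (div_le_iff₀ hp).mpr (by linarith)
  have hpsi := psi_nonneg (q / p) ht ht2
  rw [Real.log_div hq.ne' hp.ne'] at hpsi
  rw [Real.log_div hp.ne' hq.ne']
  have key := mul_le_mul_of_nonneg_left hpsi hp.le
  have e1 : p * ((1 - Real.log 2) * (q / p - 1) ^ 2) = (1 - Real.log 2) * ((q - p) ^ 2 / p) := by
    field_simp
  have e2 : p * (q / p - 1 - (Real.log q - Real.log p))
      = (q - p) - p * Real.log q + p * Real.log p := by
    field_simp; ring
  rw [e1, e2] at key
  have e3 : p * (Real.log p - Real.log q) = p * Real.log p - p * Real.log q := by ring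
  linarith [key, e3.ge, e3.le]

private lemma pointwise_A (p q : ℝ) (hp : 0 < p) (hq : 0 < q) (h : 2 * p < q) :
    (1 - Real.log 2) * (q - p) ≤ p * Real.log (p / q) + (q - p) := by
  have hl2 : (0.6931471803 : ℝ) < Real.log 2 := Real.log_two_gt_d9
  have ht : (2 : ℝ) < q / p := (lt_div_iff₀ hp).mpr (by linarith)
  have key : Real.log (q / p) ≤ Real.log 2 + (q / p) / 2 - 1 := by
    have h1 := Real.log_le_sub_one_of_pos (show (0:ℝ) < q / p / 2 by positivity)
    have heq : Real.log (q / p / 2) = Real.log (q / p) - Real.log 2 :=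
      Real.log_div (ne_of_gt (div_pos hq hp)) two_ne_zero
    linarith
  have key2 : Real.log (q / p) ≤ Real.log 2 * (q / p - 1) := by
    nlinarith [mul_pos (show (0:ℝ) < q / p - 2 by linarith)
      (show (0:ℝ) < Real.log 2 - 1/2 by linarith)]
  have key3 := mul_le_mul_of_nonneg_left key2 hp.le
  rw [Real.log_div hq.ne' hp.ne'] at key3
  rw [Real.log_div hp.ne' hq.ne']
  have e2 : p * (Real.log 2 * (q / p - 1)) = Real.log 2 * (q - p) := by field_simp
  rw [e2] at key3
  have e3 : p * (Real.log q - Real.log p) = p * Real.log q - p * Real.log p := by ring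
  have e4 : p * (Real.log p - Real.log q) = p * Real.log p - p * Real.log q := by ring
  linarith [key3, e3.le, e3.ge, e4.le, e4.ge]

/-- Split lower bound for the KL divergence (key step in the proof of Lemma 3.3):
with `A = {q > 2p}` and `B = {q ≤ 2p}` inside `Ω`,
`∫_Ω p log (p/q) ≥ (1 - log 2) ( ∫_A (q - p) + ∫_B (q - p)²/p )`. -/
theorem KL_split_lower_bound (d : ℕ)
    (Ω : Set (EuclideanSpace ℝ (Fin d))) (hΩ : MeasurableSet Ω)
    (p q : EuclideanSpace ℝ (Fin d) → ℝ) (hpm : Measurable p) (hqm : Measurable q)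
    (hppos : ∀ x ∈ Ω, 0 < p x) (hqpos : ∀ x ∈ Ω, 0 < q x)
    (hp1 : ∫ x in Ω, p x = 1) (hq1 : ∫ x in Ω, q x = 1)
    (hkl : IntegrableOn (fun x => p x * Real.log (p x / q x)) Ω) :
    (1 - Real.log 2) *
        ((∫ x in Ω ∩ {x | 2 * p x < q x}, (q x - p x)) +
          ∫ x in Ω ∩ {x | q x ≤ 2 * p x}, (q x - p x) ^ 2 / p x) ≤
      ∫ x in Ω, p x * Real.log (p x / q x) := by
  have hpint : IntegrableOn p Ω := by
    by_contra hcon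
    rw [MeasureTheory.integral_undef hcon] at hp1
    norm_num at hp1
  have hqint : IntegrableOn q Ω := by
    by_contra hcon
    rw [MeasureTheory.integral_undef hcon] at hq1
    norm_num at hq1
  set S1 : Set (EuclideanSpace ℝ (Fin d)) := Ω ∩ {x | 2 * p x < q x} with hS1
  set S2 : Set (EuclideanSpace ℝ (Fin d)) := Ω ∩ {x | q x ≤ 2 * p x} with hS2
  have hS1m : MeasurableSet S1 := hΩ.inter (measurableSet_lt (measurable_const.mul hpm) hqm)
  have hS2m : MeasurableSet S2 := hΩ.inter (measurableSet_le hqm (measurable_const.mul hpm))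
  have hunion : S1 ∪ S2 = Ω := by
    rw [hS1, hS2, ← Set.inter_union_distrib_left]
    have : {x | 2 * p x < q x} ∪ {x | q x ≤ 2 * p x} = Set.univ := by
      ext x; simp [lt_or_ge]
    rw [this, Set.inter_univ]
  have hdisj : Disjoint S1 S2 := by
    rw [Set.disjoint_left]
    intro x hx1 hx2
    have h1 : 2 * p x < q x := hx1.2
    have h2 : q x ≤ 2 * p x := hx2.2
    linarith
  have hqpΩ : IntegrableOn (fun x => q x - p x) Ω := hqint.sub hpint
  set g : EuclideanSpace ℝ (Fin d) → ℝ :=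
    fun x => p x * Real.log (p x / q x) + (q x - p x) with hg
  have hgΩ : IntegrableOn g Ω := hkl.add hqpΩ
  have hgS1 : IntegrableOn g S1 := hgΩ.mono_set Set.inter_subset_left
  have hgS2 : IntegrableOn g S2 := hgΩ.mono_set Set.inter_subset_left
  have hgint : ∫ x in Ω, g x = ∫ x in Ω, p x * Real.log (p x / q x) := by
    rw [hg]
    rw [MeasureTheory.integral_add hkl hqpΩ,
      MeasureTheory.integral_sub hqint hpint, hp1, hq1]
    ring
  have hcpos : (0:ℝ) < 1 - Real.log 2 := by
    have := Real.log_two_lt_d9; norm_num at this ⊢; linarith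
  -- integrability of the quadratic term on S2
  have hqm2 : Measurable fun x => (1 - Real.log 2) * ((q x - p x) ^ 2 / p x) :=
    (((hqm.sub hpm).pow_const 2).div hpm).const_mul _
  have hint2 : IntegrableOn (fun x => (1 - Real.log 2) * ((q x - p x) ^ 2 / p x)) S2 := by
    refine MeasureTheory.Integrable.mono hgS2 hqm2.aestronglyMeasurable ?_
    filter_upwards [ae_restrict_mem hS2m] with x hx
    have hxp := hppos x hx.1
    have hxq := hqpos x hx.1
    have h0 : (0:ℝ) ≤ (1 - Real.log 2) * ((q x - p x) ^ 2 / p x) := by positivity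
    have hle := pointwise_B (p x) (q x) hxp hxq hx.2
    rw [Real.norm_eq_abs, Real.norm_eq_abs, abs_of_nonneg h0]
    exact hle.trans (le_abs_self _)
  have hint1 : IntegrableOn (fun x => (1 - Real.log 2) * (q x - p x)) S1 :=
    (hqpΩ.mono_set Set.inter_subset_left).const_mul _
  have hmono1 : ∫ x in S1, (1 - Real.log 2) * (q x - p x) ≤ ∫ x in S1, g x := by
    apply MeasureTheory.setIntegral_mono_on hint1 hgS1 hS1m
    intro x hx
    exact pointwise_A (p x) (q x) (hppos x hx.1) (hqpos x hx.1) hx.2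
  have hmono2 : ∫ x in S2, (1 - Real.log 2) * ((q x - p x) ^ 2 / p x) ≤ ∫ x in S2, g x := by
    apply MeasureTheory.setIntegral_mono_on hint2 hgS2 hS2m
    intro x hx
    exact pointwise_B (p x) (q x) (hppos x hx.1) (hqpos x hx.1) hx.2
  have hsplit : ∫ x in S1 ∪ S2, g x = (∫ x in S1, g x) + ∫ x in S2, g x :=
    MeasureTheory.setIntegral_union hdisj hS2m hgS1 hgS2
  rw [MeasureTheory.integral_const_mul] at hmono1
  rw [MeasureTheory.integral_const_mul] at hmono2
  calc (1 - Real.log 2) * ((∫ x in S1, (q x - p x)) + ∫ x in S2, (q x - p x) ^ 2 / p x)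
      = (1 - Real.log 2) * (∫ x in S1, (q x - p x))
        + (1 - Real.log 2) * ∫ x in S2, (q x - p x) ^ 2 / p x := by ring
    _ ≤ (∫ x in S1, g x) + ∫ x in S2, g x := add_le_add hmono1 hmono2
    _ = ∫ x in S1 ∪ S2, g x := hsplit.symm
    _ = ∫ x in Ω, g x := by rw [hunion]
    _ = ∫ x in Ω, p x * Real.log (p x / q x) := hgint
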